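/- Let H be a complex Hilbert space. Let D : H → H be a bounded self-adjoint invertible operator, ψ ∈ H a unit vector with D ψ = λ_D • ψ for some real λ_D < 0, and ω > 0 such that Re ⟪D v, v⟫ ≥ ω ‖v‖² for every v orthogonal to ψ. Let f : ℝ → ℝ be continuous with 0 ≤ f(t) ≤ β₊ for all t ∈ ℝ. Then for every u ∈ H, writing u' := u − ⟪u, ψ⟫ • ψ for the projection of u off the ground state, one has Re ⟪(cfc f D)(D⁻¹ u), u⟫ ≤ β₊ · Re ⟪D⁻¹ u', u'⟫. -/

import Mathlib

open scoped InnerProductSpace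

section Aux

variable {H : Type*} [NormedAddCommGroup H] [InnerProductSpace ℂ H] [CompleteSpace H]

private lemma aeval_eigen_aux (D : H →L[ℂ] H) (ψ : H) (lamD : ℝ) (hDψ : D ψ = lamD • ψ)
    (p : Polynomial ℝ) : (Polynomial.aeval D p) ψ = p.eval lamD • ψ := by
  have hpow : ∀ n : ℕ, (D ^ n) ψ = (lamD ^ n : ℝ) • ψ := by
    intro n
    induction n with
    | zero => simp
    | succ k ih =>
      rw [pow_succ, ContinuousLinearMap.mul_apply, hDψ,
        ContinuousLinearMap.map_smul_of_tower, ih, smul_smul, pow_succ, mul_comm]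
  induction p using Polynomial.induction_on' with
  | add p q hp hq =>
    rw [map_add, Polynomial.eval_add, ContinuousLinearMap.add_apply, hp, hq, add_smul]
  | monomial n r =>
    rw [Polynomial.aeval_monomial, Polynomial.eval_monomial,
      ContinuousLinearMap.mul_apply, hpow, ContinuousLinearMap.map_smul_of_tower,
      Algebra.algebraMap_eq_smul_one, ContinuousLinearMap.smul_apply,
      ContinuousLinearMap.one_apply, smul_smul, mul_comm (lamD ^ n) r]

private lemma cfc_eigen_aux (D : H →L[ℂ] H) (hD : IsSelfAdjoint D)
    (ψ : H) (hψ0 : ψ ≠ 0) (lamD : ℝ) (hDψ : D ψ = lamD • ψ)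
    (h : ℝ → ℝ) (hh : Continuous h) :
    cfc h D ψ = h lamD • ψ := by
  haveI : CompactSpace (spectrum ℝ D) :=
    ContinuousFunctionalCalculus.compactSpace_spectrum (R := ℝ) D
  have hmem : lamD ∈ spectrum ℝ D := by
    rw [spectrum.mem_iff]
    intro hu
    obtain ⟨u, hu⟩ := hu
    apply hψ0
    have h0 : (algebraMap ℝ (H →L[ℂ] H) lamD - D) ψ = 0 := by
      rw [ContinuousLinearMap.sub_apply, Algebra.algebraMap_eq_smul_one,
        ContinuousLinearMap.smul_apply, ContinuousLinearMap.one_apply, hDψ, sub_self]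
    calc ψ = ((1 : H →L[ℂ] H)) ψ := rfl
      _ = ((↑u⁻¹ * ↑u : H →L[ℂ] H)) ψ := by rw [u.inv_mul]
      _ = (↑u⁻¹ : H →L[ℂ] H) ((↑u : H →L[ℂ] H) ψ) := rfl
      _ = 0 := by rw [hu, h0, map_zero]
  set σ := spectrum ℝ D with hσ
  have key : ∀ g : C(σ, ℝ), cfcHom (R := ℝ) hD g ψ = g ⟨lamD, hmem⟩ • ψ := by
    intro g
    have hgmem : g ∈ closure ((polynomialFunctions σ : Subalgebra ℝ C(σ, ℝ)) : Set C(σ, ℝ)) := by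
      rw [← Subalgebra.topologicalClosure_coe, polynomialFunctions.topologicalClosure σ]
      trivial
    have hcont1 : Continuous (fun g : C(σ, ℝ) => cfcHom (R := ℝ) hD g ψ) :=
      (ContinuousLinearMap.apply ℂ H ψ).continuous.comp
        (cfcHom_isClosedEmbedding (R := ℝ) hD).continuous
    have hcont2 : Continuous (fun g : C(σ, ℝ) => g ⟨lamD, hmem⟩ • ψ) :=
      Continuous.smul (f := fun g : C(σ, ℝ) => g ⟨lamD, hmem⟩) (continuous_eval_const _) continuous_const
    have hclosed : IsClosed {g : C(σ, ℝ) | cfcHom (R := ℝ) hD g ψ = g ⟨lamD, hmem⟩ • ψ} :=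
      isClosed_eq hcont1 hcont2
    refine closure_minimal ?_ hclosed hgmem
    rintro g' ⟨p, -, rfl⟩
    show cfcHom (R := ℝ) hD (p.toContinuousMapOn σ) ψ = _
    have h1 : cfcHom (R := ℝ) hD (p.toContinuousMapOn σ) = cfc p.eval D := by
      rw [cfc_apply (R := ℝ) p.eval D hD (p.continuous_aeval.continuousOn)]
      congr 1
    rw [h1, cfc_polynomial p D hD, aeval_eigen_aux D ψ lamD hDψ p]
    rfl
  have h3 : cfc h D = cfcHom (R := ℝ) hD ⟨σ.restrict h, hh.continuousOn.restrict⟩ :=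
    cfc_apply (R := ℝ) h D hD hh.continuousOn
  rw [h3, key ⟨σ.restrict h, hh.continuousOn.restrict⟩]
  rfl

end Aux

/-- The upper bound (e:LTUB) from the proof of Lemma 2.6: if `D` is bounded self-adjoint
invertible with simple negative ground state `D ψ = lamD • ψ` (`‖ψ‖ = 1`, `lamD < 0`)
and `Re ⟪D v, v⟫ ≥ ω ‖v‖²` on `{ψ}⊥` (`ω > 0`), and `f : ℝ → ℝ` is continuous with
`0 ≤ f ≤ βhi` (`βhi` plays the role of β₊), then for every `u ∈ H`, writing
`u' := u - ⟪u, ψ⟫ • ψ` (paper convention: inner product linear in its first argument,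
so `⟪u, ψ⟫` is `⟪ψ, u⟫_ℂ` in Mathlib's convention), one has
`Re ⟪(cfc f D)(D⁻¹ u), u⟫ ≤ βhi · Re ⟪D⁻¹ u', u'⟫`. -/
theorem cfc_Dinv_upper_bound_seminorm
    {H : Type*} [NormedAddCommGroup H] [InnerProductSpace ℂ H] [CompleteSpace H]
    (D Dinv : H →L[ℂ] H) (hD : IsSelfAdjoint D)
    (hD1 : D.comp Dinv = ContinuousLinearMap.id ℂ H)
    (hD2 : Dinv.comp D = ContinuousLinearMap.id ℂ H)
    (ψ : H) (hψ : ‖ψ‖ = 1) (lamD : ℝ) (hlamD : lamD < 0) (hDψ : D ψ = lamD • ψ)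
    (ω : ℝ) (hω : 0 < ω)
    (hgap : ∀ v : H, ⟪ψ, v⟫_ℂ = 0 → ω * ‖v‖ ^ 2 ≤ (⟪v, D v⟫_ℂ).re)
    (βhi : ℝ) (f : ℝ → ℝ) (hf : Continuous f)
    (hfb : ∀ t : ℝ, 0 ≤ f t ∧ f t ≤ βhi) :
    ∀ u : H,
      (⟪u, (cfc f D) (Dinv u)⟫_ℂ).re ≤
        βhi * (⟪u - ⟪ψ, u⟫_ℂ • ψ, Dinv (u - ⟪ψ, u⟫_ℂ • ψ)⟫_ℂ).re := by
  intro u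
  have hψ0 : ψ ≠ 0 := by
    intro h0
    rw [h0, norm_zero] at hψ
    norm_num at hψ
  -- basic algebra facts about D and Dinv
  have hDDinv : D * Dinv = 1 := hD1
  have hDinvD : Dinv * D = 1 := hD2
  have hDinvSA : IsSelfAdjoint Dinv := by
    have hstar : star Dinv * D = 1 := by
      have := congrArg star hDDinv
      rwa [star_mul, star_one, hD.star_eq] at this
    show star Dinv = Dinv
    calc star Dinv = star Dinv * (D * Dinv) := by rw [hDDinv, mul_one]
      _ = (star Dinv * D) * Dinv := by rw [mul_assoc]
      _ = Dinv := by rw [hstar, one_mul]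
  -- self-adjoint operators move across the inner product
  have hsa_inner : ∀ (A : H →L[ℂ] H), IsSelfAdjoint A → ∀ x y : H,
      ⟪A x, y⟫_ℂ = ⟪x, A y⟫_ℂ := by
    intro A hA x y
    conv_lhs => rw [← (ContinuousLinearMap.isSelfAdjoint_iff'.mp hA)]
    exact ContinuousLinearMap.adjoint_inner_left A y x
  -- eigenvector facts
  have hlam0 : lamD ≠ 0 := ne_of_lt hlamD
  have hDinvψ : Dinv ψ = (lamD⁻¹ : ℝ) • ψ := by
    have h1 : Dinv (D ψ) = ψ := by
      rw [← ContinuousLinearMap.comp_apply, hD2]; rfl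
    rw [hDψ, ContinuousLinearMap.map_smul_of_tower] at h1
    have h2 : (lamD⁻¹ : ℝ) • lamD • Dinv ψ = (lamD⁻¹ : ℝ) • ψ := by rw [h1]
    rwa [smul_smul, inv_mul_cancel₀ hlam0, one_smul] at h2
  -- orthogonality preservation by self-adjoint operators with ψ as eigenvector
  have horth_pres : ∀ (A : H →L[ℂ] H), IsSelfAdjoint A → ∀ (μ : ℝ), A ψ = μ • ψ →
      ∀ v : H, ⟪ψ, v⟫_ℂ = 0 → ⟪ψ, A v⟫_ℂ = 0 := by
    intro A hA μ hAψ v hv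
    rw [← hsa_inner A hA ψ v, hAψ, ← algebraMap_smul ℂ μ ψ, inner_smul_left, hv, mul_zero]
  -- the decomposition of u
  set c : ℂ := ⟪ψ, u⟫_ℂ with hc
  set u' : H := u - c • ψ with hu'
  have hψψ : ⟪ψ, ψ⟫_ℂ = 1 := by
    rw [inner_self_eq_norm_sq_to_K, hψ]
    norm_num
  have horth : ⟪ψ, u'⟫_ℂ = 0 := by
    rw [hu', inner_sub_right, inner_smul_right, hψψ, mul_one, sub_self]
  have horth' : ⟪u', ψ⟫_ℂ = 0 := by
    rw [← inner_conj_symm, horth, map_zero]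
  -- cfc facts
  have hfsa : IsSelfAdjoint (cfc f D) := cfc_predicate f D
  have hfψ : cfc f D ψ = f lamD • ψ := cfc_eigen_aux D hD ψ hψ0 lamD hDψ f hf
  -- the square root of βhi - f
  set g : ℝ → ℝ := fun t => Real.sqrt (βhi - f t) with hg
  have hgc : Continuous g := (continuous_const.sub hf).sqrt
  set S : H →L[ℂ] H := cfc g D with hS
  have hSsa : IsSelfAdjoint S := cfc_predicate g D
  have hSψ : S ψ = g lamD • ψ := cfc_eigen_aux D hD ψ hψ0 lamD hDψ g hgc
  have hSsq : S * S = cfc (fun t => βhi - f t) D := by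
    rw [hS, ← cfc_mul g g D hgc.continuousOn hgc.continuousOn]
    apply cfc_congr
    intro t _
    exact Real.mul_self_sqrt (sub_nonneg.mpr (hfb t).2)
  have hsubc : cfc (fun t => βhi - f t) D = algebraMap ℝ (H →L[ℂ] H) βhi - cfc f D := by
    rw [cfc_sub (fun _ : ℝ => βhi) f D, cfc_const βhi D hD]
  -- commutation of S with Dinv
  have hcommD : Commute S D := by
    have h4 := cfc_commute_cfc (R := ℝ) g id D
    rwa [cfc_id ℝ D] at h4
  have hcommInv : S * Dinv = Dinv * S := by
    calc S * Dinv = Dinv * D * S * Dinv := by rw [hDinvD, one_mul]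
      _ = Dinv * (S * D) * Dinv := by rw [mul_assoc Dinv D S, hcommD.eq]
      _ = Dinv * S * (D * Dinv) := by simp only [mul_assoc]
      _ = Dinv * S := by rw [hDDinv, mul_one]
  have hcommInv' : ∀ x : H, S (Dinv x) = Dinv (S x) := by
    intro x
    have := congrArg (fun T : H →L[ℂ] H => T x) hcommInv
    simpa [ContinuousLinearMap.mul_apply] using this
  -- key positivity: for v ⊥ ψ, Re ⟪v, Dinv v⟫ ≥ 0
  have hpos : ∀ v : H, ⟪ψ, v⟫_ℂ = 0 → 0 ≤ (⟪v, Dinv v⟫_ℂ).re := by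
    intro v hv
    set y : H := Dinv v with hy
    have hyorth : ⟪ψ, y⟫_ℂ = 0 :=
      horth_pres Dinv hDinvSA lamD⁻¹ hDinvψ v hv
    have hvy : v = D y := by
      rw [hy, ← ContinuousLinearMap.comp_apply, hD1]; rfl
    calc (0 : ℝ) ≤ ω * ‖y‖ ^ 2 := by positivity
      _ ≤ (⟪y, D y⟫_ℂ).re := hgap y hyorth
      _ = (⟪D y, y⟫_ℂ).re := by rw [hsa_inner D hD y y]
      _ = (⟪v, Dinv v⟫_ℂ).re := by rw [← hvy, ← hy]
  -- decomposition of the left-hand side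
  have hu_decomp : u = c • ψ + u' := by rw [hu']; abel
  set x' : H := Dinv u' with hx'
  have hx'orth : ⟪ψ, x'⟫_ℂ = 0 := horth_pres Dinv hDinvSA lamD⁻¹ hDinvψ u' horth
  have hfx'orth : ⟪ψ, cfc f D x'⟫_ℂ = 0 := horth_pres (cfc f D) hfsa (f lamD) hfψ x' hx'orth
  have hTψ : cfc f D (Dinv (c • ψ)) = (lamD⁻¹ * f lamD : ℝ) • (c • ψ) := by
    rw [map_smul, hDinvψ, map_smul, ContinuousLinearMap.map_smul_of_tower, hfψ,
      smul_comm c (lamD⁻¹ : ℝ) (f lamD • ψ), smul_comm c (f lamD) ψ, smul_smul]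
  have hexpand : ⟪u, cfc f D (Dinv u)⟫_ℂ =
      ((lamD⁻¹ * f lamD : ℝ) : ℂ) * (⟪c • ψ, c • ψ⟫_ℂ) + ⟪u', cfc f D x'⟫_ℂ := by
    conv_lhs => rw [hu_decomp]
    rw [map_add Dinv (c • ψ) u', map_add (cfc f D) (Dinv (c • ψ)) (Dinv u'), hTψ, ← hx']
    rw [inner_add_left, inner_add_right, inner_add_right]
    have e1 : ⟪c • ψ, (lamD⁻¹ * f lamD : ℝ) • (c • ψ)⟫_ℂ =
        ((lamD⁻¹ * f lamD : ℝ) : ℂ) * ⟪c • ψ, c • ψ⟫_ℂ := by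
      rw [← algebraMap_smul ℂ (lamD⁻¹ * f lamD : ℝ) (c • ψ), inner_smul_right]
      rfl
    have e2 : ⟪c • ψ, cfc f D x'⟫_ℂ = 0 := by
      rw [inner_smul_left, hfx'orth, mul_zero]
    have e3 : ⟪u', (lamD⁻¹ * f lamD : ℝ) • (c • ψ)⟫_ℂ = 0 := by
      rw [← algebraMap_smul ℂ (lamD⁻¹ * f lamD : ℝ) (c • ψ), inner_smul_right,
        inner_smul_right, horth', mul_zero, mul_zero]
    rw [e1, e2, e3]
    ring
  -- first step: drop the ground-state contribution
  have hstep1 : (⟪u, cfc f D (Dinv u)⟫_ℂ).re ≤ (⟪u', cfc f D x'⟫_ℂ).re := by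
    rw [hexpand, Complex.add_re]
    have hcc : ⟪c • ψ, c • ψ⟫_ℂ = ((‖c • ψ‖ : ℝ) : ℂ) ^ 2 := inner_self_eq_norm_sq_to_K _
    have h5 : ((((lamD⁻¹ * f lamD : ℝ)) : ℂ) * ⟪c • ψ, c • ψ⟫_ℂ).re =
        (lamD⁻¹ * f lamD) * ‖c • ψ‖ ^ 2 := by
      rw [hcc]
      norm_cast
    rw [h5]
    have h6 : (lamD⁻¹ * f lamD) * ‖c • ψ‖ ^ 2 ≤ 0 := by
      have h7 : lamD⁻¹ * f lamD ≤ 0 :=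
        mul_nonpos_of_nonpos_of_nonneg (inv_nonpos.mpr (le_of_lt hlamD)) (hfb lamD).1
      have h8 : (0 : ℝ) ≤ ‖c • ψ‖ ^ 2 := by positivity
      exact mul_nonpos_of_nonpos_of_nonneg h7 h8
    linarith
  -- second step: the spectral bound on the orthogonal complement
  have hstep2 : (⟪u', cfc f D x'⟫_ℂ).re ≤ βhi * (⟪u', x'⟫_ℂ).re := by
    have hkey : βhi * (⟪u', x'⟫_ℂ).re - (⟪u', cfc f D x'⟫_ℂ).re =
        (⟪S u', Dinv (S u')⟫_ℂ).re := by
      have e1 : (S * S) x' = βhi • x' - cfc f D x' := by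
        rw [hSsq, hsubc, ContinuousLinearMap.sub_apply, Algebra.algebraMap_eq_smul_one,
          ContinuousLinearMap.smul_apply, ContinuousLinearMap.one_apply]
      have e2 : ⟪u', (S * S) x'⟫_ℂ = ⟪S u', Dinv (S u')⟫_ℂ := by
        rw [ContinuousLinearMap.mul_apply, ← hsa_inner S hSsa u' (S x'), hx', hcommInv' u']
      have e3 : ⟪u', βhi • x' - cfc f D x'⟫_ℂ = ((βhi : ℂ)) * ⟪u', x'⟫_ℂ - ⟪u', cfc f D x'⟫_ℂ := by
        rw [inner_sub_right, ← algebraMap_smul ℂ βhi x', inner_smul_right]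
        rfl
      rw [← e2, e1, e3, Complex.sub_re, Complex.mul_re]
      simp
    have hw : ⟪ψ, S u'⟫_ℂ = 0 := horth_pres S hSsa (g lamD) hSψ u' horth
    have := hpos (S u') hw
    linarith
  calc (⟪u, cfc f D (Dinv u)⟫_ℂ).re ≤ (⟪u', cfc f D x'⟫_ℂ).re := hstep1
    _ ≤ βhi * (⟪u', x'⟫_ℂ).re := hstep2
    _ = βhi * (⟪u - ⟪ψ, u⟫_ℂ • ψ, Dinv (u - ⟪ψ, u⟫_ℂ • ψ)⟫_ℂ).re := by rw [← hc, ← hu', ← hx']
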